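/- Let ρ_λ^+ = λ|ψ₊⟩⟨ψ₊| + (1−λ)I/4 with |ψ₊⟩ = (|01⟩+|10⟩)/√2 and λ ∈ (0,1), and let U_x(θ) = e^{iθσ_x/2}. The SLD quantum Fisher information of the family θ ↦ (U_x(θ)⊗U_x(θ)) ρ_λ^+ (U_x(θ)⊗U_x(θ))† equals 8λ²/(1+λ), independently of θ. -/

import Mathlib

open Matrix Kronecker
noncomputable section

def σx : Matrix (Fin 2) (Fin 2) ℂ := !![0, 1; 1, 0]

/-- The Bell state `|ψ₊⟩ = (|01⟩ + |10⟩)/√2`. -/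
def ψplus : Fin 2 × Fin 2 → ℂ := fun p =>
  if p = (0, 1) then ((Real.sqrt 2)⁻¹ : ℝ) else if p = (1, 0) then ((Real.sqrt 2)⁻¹ : ℝ) else 0

/-- `ρ_λ^+ = λ|ψ₊⟩⟨ψ₊| + (1-λ)I/4`. -/
def rhoPlus (l : ℝ) : Matrix (Fin 2 × Fin 2) (Fin 2 × Fin 2) ℂ :=
  (l : ℂ) • vecMulVec ψplus (star ψplus) + (((1 - l) / 4 : ℝ) : ℂ) • 1

/-- `U_x(θ) = e^{iθσ_x/2}`. -/
def Ux (t : ℝ) : Matrix (Fin 2) (Fin 2) ℂ :=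
  NormedSpace.exp ((Complex.I * (t : ℂ) / 2) • σx)

/-! ### Auxiliary material -/

namespace SLDaux

attribute [local instance] Matrix.linftyOpSemiNormedRing Matrix.linftyOpNormedRing
  Matrix.linftyOpNormedAlgebra

def B : Matrix (Fin 2) (Fin 2) ℂ := (Complex.I / 2) • σx

def G : Matrix (Fin 2 × Fin 2) (Fin 2 × Fin 2) ℂ :=
  B ⊗ₖ (1 : Matrix (Fin 2) (Fin 2) ℂ) + (1 : Matrix (Fin 2) (Fin 2) ℂ) ⊗ₖ B

lemma Ux_eq (t : ℝ) : Ux t = NormedSpace.exp (t • B) := by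
  rw [Ux]
  congr 1
  ext i j
  simp [B, Matrix.smul_apply, Complex.real_smul]
  ring

def kr1 : Matrix (Fin 2) (Fin 2) ℂ →ₐ[ℂ] Matrix (Fin 2 × Fin 2) (Fin 2 × Fin 2) ℂ where
  toFun M := M ⊗ₖ (1 : Matrix (Fin 2) (Fin 2) ℂ)
  map_one' := Matrix.one_kronecker_one
  map_mul' A C := by rw [← Matrix.mul_kronecker_mul, Matrix.one_mul]
  map_zero' := Matrix.zero_kronecker _
  map_add' A C := Matrix.add_kronecker _ _ _
  commutes' r := by
    simp only [Algebra.algebraMap_eq_smul_one, Matrix.smul_kronecker, Matrix.one_kronecker_one]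

def k1r : Matrix (Fin 2) (Fin 2) ℂ →ₐ[ℂ] Matrix (Fin 2 × Fin 2) (Fin 2 × Fin 2) ℂ where
  toFun M := (1 : Matrix (Fin 2) (Fin 2) ℂ) ⊗ₖ M
  map_one' := Matrix.one_kronecker_one
  map_mul' A C := by rw [← Matrix.mul_kronecker_mul, Matrix.one_mul]
  map_zero' := Matrix.kronecker_zero _
  map_add' A C := Matrix.kronecker_add _ _ _
  commutes' r := by
    simp only [Algebra.algebraMap_eq_smul_one, Matrix.kronecker_smul, Matrix.one_kronecker_one]

lemma kron_exp (t : ℝ) : Ux t ⊗ₖ Ux t = NormedSpace.exp (t • G) := by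
  have h1 : Ux t ⊗ₖ (1 : Matrix (Fin 2) (Fin 2) ℂ)
      = NormedSpace.exp (t • (B ⊗ₖ (1 : Matrix (Fin 2) (Fin 2) ℂ))) := by
    rw [Ux_eq]
    have := NormedSpace.map_exp kr1 (LinearMap.continuous_of_finiteDimensional kr1.toLinearMap)
      (t • B)
    simp [kr1, Matrix.smul_kronecker] at this
    exact this
  have h2 : (1 : Matrix (Fin 2) (Fin 2) ℂ) ⊗ₖ Ux t
      = NormedSpace.exp (t • ((1 : Matrix (Fin 2) (Fin 2) ℂ) ⊗ₖ B)) := by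
    rw [Ux_eq]
    have := NormedSpace.map_exp k1r (LinearMap.continuous_of_finiteDimensional k1r.toLinearMap)
      (t • B)
    simp [k1r, Matrix.kronecker_smul] at this
    exact this
  have hc : Commute (t • (B ⊗ₖ (1 : Matrix (Fin 2) (Fin 2) ℂ)))
      (t • ((1 : Matrix (Fin 2) (Fin 2) ℂ) ⊗ₖ B)) := by
    apply Commute.smul_left; apply Commute.smul_right
    unfold Commute SemiconjBy
    rw [← Matrix.mul_kronecker_mul, ← Matrix.mul_kronecker_mul, Matrix.one_mul, Matrix.mul_one]
  calc Ux t ⊗ₖ Ux t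
      = (Ux t ⊗ₖ (1 : Matrix (Fin 2) (Fin 2) ℂ)) * ((1 : Matrix (Fin 2) (Fin 2) ℂ) ⊗ₖ Ux t) := by
        rw [← Matrix.mul_kronecker_mul, Matrix.one_mul, Matrix.mul_one]
    _ = NormedSpace.exp (t • G) := by
        rw [h1, h2, ← Matrix.exp_add_of_commute _ _ hc, G, smul_add]

lemma B_conjT : Bᴴ = -B := by
  ext i j
  fin_cases i <;> fin_cases j <;>
    simp [B, σx, Matrix.conjTranspose_apply] <;> ring

lemma G_conjT : Gᴴ = -G := by
  ext ⟨a,b⟩ ⟨c,d⟩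
  fin_cases a <;> fin_cases b <;> fin_cases c <;> fin_cases d <;>
    simp [G, B, σx, Matrix.conjTranspose_apply, Matrix.one_apply,
      Matrix.add_apply, Matrix.kroneckerMap_apply] <;> ring

lemma hVd (θ : ℝ) : HasDerivAt (fun t : ℝ => Ux t ⊗ₖ Ux t) (G * (Ux θ ⊗ₖ Ux θ)) θ := by
  have : (fun t : ℝ => Ux t ⊗ₖ Ux t) = fun t : ℝ => NormedSpace.exp (t • G) := funext kron_exp
  rw [this, kron_exp]
  exact hasDerivAt_exp_smul_const' G θ

lemma VH_exp (t : ℝ) : (Ux t ⊗ₖ Ux t)ᴴ = NormedSpace.exp (t • (-G)) := by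
  rw [kron_exp, ← Matrix.exp_conjTranspose]
  congr 1
  rw [Matrix.conjTranspose_smul, G_conjT]
  simp

lemma V_unitary (t : ℝ) :
    (Ux t ⊗ₖ Ux t)ᴴ * (Ux t ⊗ₖ Ux t) = 1 ∧ (Ux t ⊗ₖ Ux t) * (Ux t ⊗ₖ Ux t)ᴴ = 1 := by
  have hVH : (Ux t ⊗ₖ Ux t)ᴴ = NormedSpace.exp (-(t • G)) := by rw [VH_exp]; simp
  have hc : Commute (-(t • G)) (t • G) := (Commute.refl _).neg_left
  constructor
  · rw [hVH, kron_exp, ← Matrix.exp_add_of_commute _ _ hc]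
    simp
  · rw [hVH, kron_exp, ← Matrix.exp_add_of_commute _ _ hc.symm]
    simp

def entryCLM (i j : Fin 2 × Fin 2) : Matrix (Fin 2 × Fin 2) (Fin 2 × Fin 2) ℂ →L[ℝ] ℂ :=
  LinearMap.toContinuousLinearMap
    { toFun := fun M => M i j
      map_add' := fun _ _ => rfl
      map_smul' := fun _ _ => rfl }

@[simp] lemma entryCLM_apply (i j : Fin 2 × Fin 2) (M : Matrix (Fin 2 × Fin 2) (Fin 2 × Fin 2) ℂ) :
    entryCLM i j M = M i j := rfl

lemma hVHd (θ : ℝ) : HasDerivAt (fun t : ℝ => (Ux t ⊗ₖ Ux t)ᴴ) (-G * (Ux θ ⊗ₖ Ux θ)ᴴ) θ := by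
  have : (fun t : ℝ => (Ux t ⊗ₖ Ux t)ᴴ) = fun t : ℝ => NormedSpace.exp (t • (-G)) :=
    funext VH_exp
  rw [this, VH_exp]
  exact hasDerivAt_exp_smul_const' (-G) θ

lemma hGVH (θ : ℝ) : G * (Ux θ ⊗ₖ Ux θ)ᴴ = (Ux θ ⊗ₖ Ux θ)ᴴ * G := by
  rw [VH_exp]
  exact (((Commute.refl G).neg_right).smul_right θ).exp_right

lemma hGV (θ : ℝ) : G * (Ux θ ⊗ₖ Ux θ) = (Ux θ ⊗ₖ Ux θ) * G := by
  rw [kron_exp]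
  exact ((Commute.refl G).smul_right θ).exp_right

lemma hFd (l θ : ℝ) (i j : Fin 2 × Fin 2) :
    HasDerivAt (fun t : ℝ => ((Ux t ⊗ₖ Ux t) * rhoPlus l * (Ux t ⊗ₖ Ux t)ᴴ) i j)
      ((G * ((Ux θ ⊗ₖ Ux θ) * rhoPlus l * (Ux θ ⊗ₖ Ux θ)ᴴ)
        - ((Ux θ ⊗ₖ Ux θ) * rhoPlus l * (Ux θ ⊗ₖ Ux θ)ᴴ) * G) i j) θ := by
  have h := (((hVd θ).mul_const (rhoPlus l)).mul (hVHd θ))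
  have h2 := (entryCLM i j).hasFDerivAt.comp_hasDerivAt θ h
  have heq : G * ((Ux θ ⊗ₖ Ux θ) * rhoPlus l * (Ux θ ⊗ₖ Ux θ)ᴴ)
        - ((Ux θ ⊗ₖ Ux θ) * rhoPlus l * (Ux θ ⊗ₖ Ux θ)ᴴ) * G
      = G * (Ux θ ⊗ₖ Ux θ) * rhoPlus l * (Ux θ ⊗ₖ Ux θ)ᴴ
        + (Ux θ ⊗ₖ Ux θ) * rhoPlus l * (-G * (Ux θ ⊗ₖ Ux θ)ᴴ) := by
    rw [Matrix.neg_mul, hGVH, Matrix.mul_neg]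
    simp only [Matrix.mul_assoc]
    abel
  simp only [entryCLM_apply, Function.comp_def] at h2
  rw [heq]
  exact h2

lemma sqrt2_inv_mul : ((Real.sqrt 2)⁻¹ : ℂ) * ((Real.sqrt 2)⁻¹ : ℂ) = 1/2 := by
  push_cast
  rw [← mul_inv, ← Complex.ofReal_mul, Real.mul_self_sqrt (by norm_num : (0:ℝ) ≤ 2)]
  norm_num

/-- explicit form of rhoPlus -/
def RP (l : ℝ) : Matrix (Fin 2 × Fin 2) (Fin 2 × Fin 2) ℂ :=
  Matrix.of fun p q =>
    if p = (0,1) ∨ p = (1,0) then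
      (if q = (0,1) ∨ q = (1,0) then (if p = q then ((1+l : ℝ) : ℂ)/4 else ((l : ℝ) : ℂ)/2) else 0)
    else (if p = q then ((1-l : ℝ) : ℂ)/4 else 0)

lemma rhoPlus_eq (l : ℝ) : rhoPlus l = RP l := by
  ext ⟨a,b⟩ ⟨c,d⟩
  fin_cases a <;> fin_cases b <;> fin_cases c <;> fin_cases d <;>
    simp [rhoPlus, RP, ψplus, Matrix.vecMulVec_apply, Matrix.one_apply, Prod.ext_iff,
      sqrt2_inv_mul] <;> push_cast <;> ring_nf

/-- explicit form of D = G ρ0 - ρ0 G -/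
def Dmat (l : ℝ) : Matrix (Fin 2 × Fin 2) (Fin 2 × Fin 2) ℂ :=
  Matrix.of fun p q =>
    if (p = ((0:Fin 2),(0:Fin 2)) ∨ p = (1,1)) ∧ (q = (0,1) ∨ q = (1,0)) then Complex.I * l / 2
    else if (p = (0,1) ∨ p = (1,0)) ∧ (q = ((0:Fin 2),(0:Fin 2)) ∨ q = (1,1)) then
      -(Complex.I * l / 2)
    else 0

set_option maxHeartbeats 2000000 in
lemma D_eq (l : ℝ) : G * rhoPlus l - rhoPlus l * G = Dmat l := by
  rw [rhoPlus_eq]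
  ext ⟨a,b⟩ ⟨c,d⟩
  fin_cases a <;> fin_cases b <;> fin_cases c <;> fin_cases d <;>
    simp [Matrix.mul_apply, Fintype.sum_prod_type, Fin.sum_univ_two, G, B, σx, RP, Dmat,
      Matrix.one_apply, Prod.ext_iff] <;> ring

set_option maxHeartbeats 2000000 in
lemma core (l : ℝ) (hl : 0 < l)
    (M : Matrix (Fin 2 × Fin 2) (Fin 2 × Fin 2) ℂ)
    (hM : RP l * M + M * RP l = (2:ℂ) • Dmat l) :
    (M * Dmat l).trace = ((8 * l^2/(1+l) : ℝ) : ℂ) := by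
  have hne : (1:ℂ) + l ≠ 0 := by
    intro h
    have := congrArg Complex.re h
    simp at this
    linarith
  have e1 := Matrix.ext_iff.2 hM ((0:Fin 2),(1:Fin 2)) ((0:Fin 2),(0:Fin 2))
  have e2 := Matrix.ext_iff.2 hM ((1:Fin 2),(0:Fin 2)) ((0:Fin 2),(0:Fin 2))
  have e3 := Matrix.ext_iff.2 hM ((0:Fin 2),(0:Fin 2)) ((0:Fin 2),(1:Fin 2))
  have e4 := Matrix.ext_iff.2 hM ((0:Fin 2),(0:Fin 2)) ((1:Fin 2),(0:Fin 2))
  have e5 := Matrix.ext_iff.2 hM ((0:Fin 2),(1:Fin 2)) ((1:Fin 2),(1:Fin 2))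
  have e6 := Matrix.ext_iff.2 hM ((1:Fin 2),(0:Fin 2)) ((1:Fin 2),(1:Fin 2))
  have e7 := Matrix.ext_iff.2 hM ((1:Fin 2),(1:Fin 2)) ((0:Fin 2),(1:Fin 2))
  have e8 := Matrix.ext_iff.2 hM ((1:Fin 2),(1:Fin 2)) ((1:Fin 2),(0:Fin 2))
  simp only [Matrix.mul_apply, Fintype.sum_prod_type, Fin.sum_univ_two, RP, Dmat,
    Matrix.add_apply, Matrix.smul_apply, Matrix.of_apply, Prod.mk.injEq, smul_eq_mul]
    at e1 e2 e3 e4 e5 e6 e7 e8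
  norm_num at e1 e2 e3 e4 e5 e6 e7 e8
  have key : (M * Dmat l).trace * ((1:ℂ)+l) = 8*(l:ℂ)^2 := by
    simp only [Matrix.trace, Matrix.diag, Matrix.mul_apply, Fintype.sum_prod_type,
      Fin.sum_univ_two, Dmat, Matrix.of_apply, Prod.mk.injEq]
    norm_num
    linear_combination (Complex.I*l)*(e1+e2+e5+e6) - (Complex.I*l)*(e3+e4+e7+e8)
      - 8*(l:ℂ)^2*Complex.I_sq
  rw [show ((8 * l^2/(1+l) : ℝ) : ℂ) = 8*(l:ℂ)^2/(1+(l:ℂ)) by push_cast; ring,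
    eq_div_iff hne]
  exact key

end SLDaux

open SLDaux in
/-- The SLD Fisher information of `θ ↦ (U_x(θ)⊗U_x(θ)) ρ_λ^+ (U_x(θ)⊗U_x(θ))†`
equals `8λ²/(1+λ)`, independently of `θ`. -/
theorem sld_fisher_rhoPlus_xRotation
    (l : ℝ) (hl : l ∈ Set.Ioo (0 : ℝ) 1)
    (ρ : ℝ → Matrix (Fin 2 × Fin 2) (Fin 2 × Fin 2) ℂ)
    (hρ : ∀ t : ℝ, ρ t = (Ux t ⊗ₖ Ux t) * rhoPlus l * (Ux t ⊗ₖ Ux t)ᴴ)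
    (θ : ℝ) (ρ' : Matrix (Fin 2 × Fin 2) (Fin 2 × Fin 2) ℂ)
    (hρ' : ∀ i j, HasDerivAt (fun t => ρ t i j) (ρ' i j) θ)
    (L : Matrix (Fin 2 × Fin 2) (Fin 2 × Fin 2) ℂ) (hL : L.IsHermitian)
    (hSLD : ρ' = (1 / 2 : ℂ) • (ρ θ * L + L * ρ θ)) :
    ((L * ρ').trace).re = 8 * l ^ 2 / (1 + l) := by
  obtain ⟨hl0, hl1⟩ := hl
  set V := Ux θ ⊗ₖ Ux θ with hV
  set ρ0 := rhoPlus l with hρ0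
  have hGV' : G * V = V * G := by rw [hV]; exact hGV θ
  have hVHG : Vᴴ * G = G * Vᴴ := by rw [hV]; exact (hGVH θ).symm
  have hρ'2 : ∀ i j, HasDerivAt (fun t => ((Ux t ⊗ₖ Ux t) * ρ0 * (Ux t ⊗ₖ Ux t)ᴴ) i j)
      (ρ' i j) θ := by
    intro i j
    have := hρ' i j
    simp only [hρ] at this
    exact this
  have hρ'eq : ρ' = G * (V * ρ0 * Vᴴ) - (V * ρ0 * Vᴴ) * G := by
    ext i j
    exact (hρ'2 i j).unique (hFd l θ i j)
  obtain ⟨hu1, hu2⟩ := V_unitary θ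
  rw [← hV] at hu1 hu2
  set M := Vᴴ * L * V with hM
  have hρθ : ρ θ = V * ρ0 * Vᴴ := hρ θ
  have hXD : G * (V * ρ0 * Vᴴ) - (V * ρ0 * Vᴴ) * G = V * Dmat l * Vᴴ := by
    rw [← D_eq, ← hρ0]
    have h1 : G * (V * ρ0 * Vᴴ) = V * (G * ρ0) * Vᴴ := by
      rw [← Matrix.mul_assoc, ← Matrix.mul_assoc, hGV', Matrix.mul_assoc V G ρ0]
    have h2 : (V * ρ0 * Vᴴ) * G = V * (ρ0 * G) * Vᴴ := by
      rw [Matrix.mul_assoc (V * ρ0) Vᴴ G, hVHG, ← Matrix.mul_assoc, Matrix.mul_assoc V ρ0 G]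
    rw [h1, h2, ← Matrix.sub_mul, ← Matrix.mul_sub]
  have c1 : Vᴴ * (V * Dmat l * Vᴴ) * V = Dmat l := by
    rw [← Matrix.mul_assoc, ← Matrix.mul_assoc, hu1, Matrix.one_mul, Matrix.mul_assoc, hu1,
      Matrix.mul_one]
  have c2 : Vᴴ * (V * ρ0 * Vᴴ * L) * V = ρ0 * M := by
    rw [hM, ← Matrix.mul_assoc, ← Matrix.mul_assoc, ← Matrix.mul_assoc, hu1, Matrix.one_mul]
    simp only [Matrix.mul_assoc]
  have c3 : Vᴴ * (L * (V * ρ0 * Vᴴ)) * V = M * ρ0 := by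
    rw [hM]
    simp only [← Matrix.mul_assoc]
    rw [Matrix.mul_assoc (Vᴴ * L * V * ρ0) Vᴴ V, hu1, Matrix.mul_one]
  have h0 : V * Dmat l * Vᴴ = (1/2:ℂ) • ((V * ρ0 * Vᴴ) * L + L * (V * ρ0 * Vᴴ)) := by
    rw [← hXD, ← hρ'eq, hSLD, hρθ]
  have h1 := congrArg (fun X => Vᴴ * X * V) h0
  beta_reduce at h1
  rw [c1] at h1
  have hsm : Vᴴ * ((1/2:ℂ) • ((V * ρ0 * Vᴴ) * L + L * (V * ρ0 * Vᴴ))) * V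
      = (1/2:ℂ) • (ρ0 * M + M * ρ0) := by
    rw [Matrix.mul_smul, Matrix.smul_mul, Matrix.mul_add, Matrix.add_mul, c2, c3]
  rw [hsm] at h1
  have hMeq : RP l * M + M * RP l = (2:ℂ) • Dmat l := by
    rw [← rhoPlus_eq, ← hρ0, h1, smul_smul]
    norm_num
  have htr : (L * ρ').trace = (M * Dmat l).trace := by
    rw [hρ'eq, hXD, hM]
    simp only [← Matrix.mul_assoc]
    rw [Matrix.trace_mul_cycle (L * V) (Dmat l) Vᴴ]
    simp only [← Matrix.mul_assoc]
  rw [htr, core l hl0 M hMeq]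
  exact Complex.ofReal_re _
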